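/- Fix integers ℓ, ℓ' ≥ 1 and let q, y, y' be complex numbers with q ≠ 0 such that all denominators below are nonzero. Then ∏_{i=1}^{ℓ} ∏_{j=1}^{ℓ'} [(y q^{i−1} − y' q^{j−1})(y' q^{j−1} − y q^{i−1})] / [(y q^{i−1} − y' q^{j})(y' q^{j} − y q^{i})] = q^{−ℓℓ'} · (y − y')(y q^{ℓ} − y' q^{ℓ'}) / [(y q^{ℓ} − y')(y − y' q^{ℓ'})]. (This is the cross term between two geometric q-strings, of lengths ℓ and ℓ', based at y and y'.) -/

import Mathlib

private lemma tel1 (f : ℕ → ℂ) (n : ℕ) (hn : 1 ≤ n)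
    (h : ∀ i, 1 ≤ i → i < n → f i ≠ 0) :
    ∏ i ∈ Finset.range n, f i / f (i + 1) = f 0 / f n := by
  induction n, hn using Nat.le_induction with
  | base => simp
  | succ n hn ih =>
    rw [Finset.prod_range_succ, ih (fun i h1 h2 => h i h1 (by omega)),
      div_mul_div_comm, mul_comm (f n) (f (n + 1)),
      mul_div_mul_right _ _ (h n hn (by omega))]

private lemma tel2 (f : ℕ → ℂ) (n : ℕ) (hn : 1 ≤ n)
    (h : ∀ i, 1 ≤ i → i < n → f i ≠ 0) :
    ∏ i ∈ Finset.range n, f (i + 1) / f i = f n / f 0 := by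
  induction n, hn using Nat.le_induction with
  | base => simp
  | succ n hn ih =>
    rw [Finset.prod_range_succ, ih (fun i h1 h2 => h i h1 (by omega)),
      div_mul_div_comm, mul_comm (f n) (f (n + 1)),
      mul_div_mul_right _ _ (h n hn (by omega))]

private lemma point (q a b c d : ℂ) (hq : q ≠ 0) :
    q⁻¹ * (q * a / c) * (b / d) = a * b / (c * d) := by
  rw [mul_div_assoc, inv_mul_cancel_left₀ hq, div_mul_div_comm]

set_option maxHeartbeats 1600000 in
theorem cross_string_term_typeA
    (ℓ ℓ' : ℕ) (hℓ : 1 ≤ ℓ) (hℓ' : 1 ≤ ℓ') (q y y' : ℂ) (hq : q ≠ 0)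
    (hden : ∀ i ∈ Finset.range ℓ, ∀ j ∈ Finset.range ℓ',
      y * q ^ i - y' * q ^ (j + 1) ≠ 0 ∧ y' * q ^ j - y * q ^ (i + 1) ≠ 0) :
    (∏ i ∈ Finset.range ℓ, ∏ j ∈ Finset.range ℓ',
        ((y * q ^ i - y' * q ^ j) * (y' * q ^ j - y * q ^ i)) /
          ((y * q ^ i - y' * q ^ (j + 1)) * (y' * q ^ j - y * q ^ (i + 1))))
    = q ^ (-(ℓ * ℓ' : ℤ)) *
        ((y - y') * (y * q ^ ℓ - y' * q ^ ℓ')) / ((y * q ^ ℓ - y') * (y - y' * q ^ ℓ')) := by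
  induction ℓ', hℓ' using Nat.le_induction with
  | base =>
    simp only [Finset.prod_range_one, pow_zero, mul_one, zero_add, pow_one, Nat.cast_one]
    have hA : ∀ i, 1 ≤ i → i < ℓ → y * q ^ i - y' * q ≠ 0 := by
      intro i h1 h2
      have := (hden i (Finset.mem_range.mpr h2) 0 (Finset.mem_range.mpr one_pos)).1
      simpa using this
    have hB : ∀ i, 1 ≤ i → i < ℓ → y' - y * q ^ i ≠ 0 := by
      intro i h1 h2
      obtain ⟨k, rfl⟩ : ∃ k, i = k + 1 := ⟨i - 1, by omega⟩
      have := (hden k (Finset.mem_range.mpr (by omega)) 0 (Finset.mem_range.mpr one_pos)).2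
      simpa using this
    have e1 : (∏ i ∈ Finset.range ℓ,
        ((y * q ^ i - y') * (y' - y * q ^ i)) /
          ((y * q ^ i - y' * q) * (y' - y * q ^ (i + 1))))
        = ∏ i ∈ Finset.range ℓ,
          (q⁻¹ * ((y * q ^ (i + 1) - y' * q) / (y * q ^ i - y' * q))) *
            ((y' - y * q ^ i) / (y' - y * q ^ (i + 1))) := by
      refine Finset.prod_congr rfl fun i hi => ?_
      rw [show y * q ^ (i + 1) - y' * q = q * (y * q ^ i - y') by ring]
      exact (point q _ _ _ _ hq).symm
    have A : (∏ i ∈ Finset.range ℓ, (y * q ^ (i + 1) - y' * q) / (y * q ^ i - y' * q))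
        = (y * q ^ ℓ - y' * q) / (y * q ^ 0 - y' * q) :=
      tel2 (fun k => y * q ^ k - y' * q) ℓ hℓ hA
    have B : (∏ i ∈ Finset.range ℓ, (y' - y * q ^ i) / (y' - y * q ^ (i + 1)))
        = (y' - y * q ^ 0) / (y' - y * q ^ ℓ) :=
      tel1 (fun k => y' - y * q ^ k) ℓ hℓ hB
    rw [e1, Finset.prod_mul_distrib, Finset.prod_mul_distrib, Finset.prod_const,
      Finset.card_range, A, B]
    have d1 : y - y' * q ≠ 0 := by
      have := (hden 0 (Finset.mem_range.mpr (by omega)) 0 (Finset.mem_range.mpr one_pos)).1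
      simpa using this
    have d2 : y' - y * q ^ ℓ ≠ 0 := by
      obtain ⟨k, rfl⟩ : ∃ k, ℓ = k + 1 := ⟨ℓ - 1, by omega⟩
      have := (hden k (Finset.mem_range.mpr (by omega)) 0 (Finset.mem_range.mpr one_pos)).2
      simpa using this
    have d3 : y * q ^ ℓ - y' ≠ 0 := by
      rw [sub_ne_zero] at d2 ⊢; exact d2.symm
    rw [zpow_neg, zpow_natCast, inv_pow]
    simp only [pow_zero, mul_one, one_mul]
    rw [show y' - y * q ^ ℓ = -(y * q ^ ℓ - y') by ring]
    field_simp
    ring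
  | succ n hn ih =>
    have hden' : ∀ i ∈ Finset.range ℓ, ∀ j ∈ Finset.range n,
        y * q ^ i - y' * q ^ (j + 1) ≠ 0 ∧ y' * q ^ j - y * q ^ (i + 1) ≠ 0 :=
      fun i hi j hj => hden i hi j (Finset.mem_range.mpr (by
        have := Finset.mem_range.mp hj; omega))
    simp only [Finset.prod_range_succ, Finset.prod_mul_distrib]
    rw [ih hden']
    have hA : ∀ i, 1 ≤ i → i < ℓ → y * q ^ i - y' * q ^ (n + 1) ≠ 0 := by
      intro i h1 h2
      exact (hden i (Finset.mem_range.mpr h2) n (Finset.mem_range.mpr (by omega))).1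
    have hB : ∀ i, 1 ≤ i → i < ℓ → y' * q ^ n - y * q ^ i ≠ 0 := by
      intro i h1 h2
      obtain ⟨k, rfl⟩ : ∃ k, i = k + 1 := ⟨i - 1, by omega⟩
      exact (hden k (Finset.mem_range.mpr (by omega)) n (Finset.mem_range.mpr (by omega))).2
    have e1 : (∏ i ∈ Finset.range ℓ,
        ((y * q ^ i - y' * q ^ n) * (y' * q ^ n - y * q ^ i)) /
          ((y * q ^ i - y' * q ^ (n + 1)) * (y' * q ^ n - y * q ^ (i + 1))))
        = ∏ i ∈ Finset.range ℓ,
          (q⁻¹ * ((y * q ^ (i + 1) - y' * q ^ (n + 1)) / (y * q ^ i - y' * q ^ (n + 1)))) *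
            ((y' * q ^ n - y * q ^ i) / (y' * q ^ n - y * q ^ (i + 1))) := by
      refine Finset.prod_congr rfl fun i hi => ?_
      rw [show y * q ^ (i + 1) - y' * q ^ (n + 1) = q * (y * q ^ i - y' * q ^ n) by ring]
      exact (point q _ _ _ _ hq).symm
    have A : (∏ i ∈ Finset.range ℓ,
        (y * q ^ (i + 1) - y' * q ^ (n + 1)) / (y * q ^ i - y' * q ^ (n + 1)))
        = (y * q ^ ℓ - y' * q ^ (n + 1)) / (y * q ^ 0 - y' * q ^ (n + 1)) :=
      tel2 (fun k => y * q ^ k - y' * q ^ (n + 1)) ℓ hℓ hA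
    have B : (∏ i ∈ Finset.range ℓ,
        (y' * q ^ n - y * q ^ i) / (y' * q ^ n - y * q ^ (i + 1)))
        = (y' * q ^ n - y * q ^ 0) / (y' * q ^ n - y * q ^ ℓ) :=
      tel1 (fun k => y' * q ^ n - y * q ^ k) ℓ hℓ hB
    rw [e1, Finset.prod_mul_distrib, Finset.prod_mul_distrib, Finset.prod_const,
      Finset.card_range, A, B]
    have n1 : y - y' * q ^ (n + 1) ≠ 0 := by
      have := (hden 0 (Finset.mem_range.mpr (by omega)) n (Finset.mem_range.mpr (by omega))).1
      simpa using this
    have n2 : y' * q ^ n - y * q ^ ℓ ≠ 0 := by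
      obtain ⟨k, rfl⟩ : ∃ k, ℓ = k + 1 := ⟨ℓ - 1, by omega⟩
      exact (hden k (Finset.mem_range.mpr (by omega)) n (Finset.mem_range.mpr (by omega))).2
    have n3 : y - y' * q ^ n ≠ 0 := by
      obtain ⟨m, rfl⟩ : ∃ m, n = m + 1 := ⟨n - 1, by omega⟩
      have := (hden 0 (Finset.mem_range.mpr (by omega)) m (Finset.mem_range.mpr (by omega))).1
      simpa using this
    have n4 : y' - y * q ^ ℓ ≠ 0 := by
      obtain ⟨k, rfl⟩ : ∃ k, ℓ = k + 1 := ⟨ℓ - 1, by omega⟩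
      have := (hden k (Finset.mem_range.mpr (by omega)) 0 (Finset.mem_range.mpr (by omega))).2
      simpa using this
    have n5 : y * q ^ ℓ - y' ≠ 0 := by
      rw [sub_ne_zero] at n4 ⊢; exact n4.symm
    have n6 : y * q ^ ℓ - y' * q ^ n ≠ 0 := by
      rw [sub_ne_zero] at n2 ⊢; exact n2.symm
    have hz : ∀ m : ℕ, (q : ℂ) ^ (-(↑ℓ * ↑m) : ℤ) = (q ^ (ℓ * m))⁻¹ := by
      intro m
      rw [← Nat.cast_mul, zpow_neg, zpow_natCast]
    rw [hz n, hz (n + 1), inv_pow]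
    simp only [pow_zero, mul_one, one_mul]
    have hp1 : (q : ℂ) ^ (ℓ * n) ≠ 0 := pow_ne_zero _ hq
    have hp2 : (q : ℂ) ^ (ℓ * (n + 1)) ≠ 0 := pow_ne_zero _ hq
    have hp3 : (q : ℂ) ^ ℓ ≠ 0 := pow_ne_zero _ hq
    field_simp [n1, n2, n3, n5, hp1, hp2, hp3]
    ring
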